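/- For all n ≥ 3, |A_n| = (n−1) · ∏_{i=2}^{n−1} (n−i)^{f_{i−2}}, where f_k are the Fibonacci numbers with f_0 = 0, f_1 = 1. -/

import Mathlib

/-- Sets of inflated random Fibonacci words: A₁ = {0}, A₂ = {1},
    Aₙ = Aₙ₋₁Aₙ₋₂ ∪ Aₙ₋₂Aₙ₋₁ for n ≥ 3 (A₀ = ∅). -/
def wordSet : ℕ → Set (List Bool)
  | 0 => ∅
  | 1 => {[false]}
  | 2 => {[true]}
  | (n + 3) => Set.image2 (· ++ ·) (wordSet (n + 2)) (wordSet (n + 1)) ∪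
      Set.image2 (· ++ ·) (wordSet (n + 1)) (wordSet (n + 2))

/-- Concatenation of sets of words: UV = {uv : u ∈ U, v ∈ V}. -/
def cat (U V : Set (List Bool)) : Set (List Bool) := Set.image2 (· ++ ·) U V

/-- W[a,b]: the set of segments wₐ…w_b (1-based indexing) of words in W. -/
def seg (W : Set (List Bool)) (a b : ℕ) : Set (List Bool) :=
  (fun w => (w.drop (a - 1)).take (b - a + 1)) '' W

/-- F(S, m): the set of all contiguous factors of length m of words in S. -/
def factorSet (S : Set (List Bool)) (m : ℕ) : Set (List Bool) :=
  {x | x.length = m ∧ ∃ w ∈ S, x <:+: w}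

/-- Fₙ: the set of factors of length fₙ occurring in any inflated word. -/
def Fn (n : ℕ) : Set (List Bool) := ⋃ m ≥ 1, factorSet (wordSet m) (Nat.fib n)

/-! ### Auxiliary lemmas -/

lemma wordSet_three (n : ℕ) : wordSet (n + 3) =
    Set.image2 (· ++ ·) (wordSet (n + 2)) (wordSet (n + 1)) ∪
      Set.image2 (· ++ ·) (wordSet (n + 1)) (wordSet (n + 2)) := rfl

lemma wordSet_length : ∀ (n : ℕ) (w : List Bool), w ∈ wordSet n → w.length = Nat.fib n
  | 0, w, h => absurd h (Set.notMem_empty w)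
  | 1, w, h => by rw [Set.mem_singleton_iff.mp h]; rfl
  | 2, w, h => by rw [Set.mem_singleton_iff.mp h]; rfl
  | (n + 3), w, h => by
    rcases h with h | h <;> obtain ⟨u, hu, v, hv, rfl⟩ := h <;>
      rw [List.length_append, wordSet_length _ _ hu, wordSet_length _ _ hv] <;>
      · have e1 : Nat.fib (n + 1 + 2) = Nat.fib (n + 1) + Nat.fib (n + 1 + 1) :=
          Nat.fib_add_two
        have e2 : Nat.fib (n + 3) = Nat.fib (n + 1) + Nat.fib (n + 2) := e1
        have e3 : Nat.fib (n + 1 + 1) = Nat.fib (n + 2) := rfl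
        omega

lemma wordSet_finite : ∀ n : ℕ, (wordSet n).Finite
  | 0 => Set.finite_empty
  | 1 => Set.finite_singleton _
  | 2 => Set.finite_singleton _
  | (n + 3) =>
    ((wordSet_finite (n + 2)).image2 _ (wordSet_finite (n + 1))).union
      ((wordSet_finite (n + 1)).image2 _ (wordSet_finite (n + 2)))

lemma cat_sub_left : ∀ (k : ℕ) {u v : List Bool}, u ∈ wordSet (k + 1) → v ∈ wordSet k →
    u ++ v ∈ wordSet (k + 2)
  | 0, _, _, _, hv => absurd hv (Set.notMem_empty _)
  | (k + 1), _, _, hu, hv => Or.inl (Set.mem_image2_of_mem hu hv)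

lemma cat_sub_right : ∀ (k : ℕ) {u v : List Bool}, u ∈ wordSet k → v ∈ wordSet (k + 1) →
    u ++ v ∈ wordSet (k + 2)
  | 0, _, _, hu, _ => absurd hu (Set.notMem_empty _)
  | (k + 1), _, _, hu, hv => Or.inr (Set.mem_image2_of_mem hu hv)

lemma split_eq {a b c d : List Bool} (h : a ++ b = c ++ d) (hl : a.length ≤ c.length) :
    ∃ r, c = a ++ r ∧ b = r ++ d := by
  rcases List.append_eq_append_iff.mp h with ⟨r, h1, h2⟩ | ⟨r, h1, h2⟩
  · exact ⟨r, h1, h2⟩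
  · have hlen := congrArg List.length h1
    simp only [List.length_append] at hlen
    have hr : r = [] := List.eq_nil_of_length_eq_zero (by omega)
    subst hr
    refine ⟨[], by simpa using h1.symm, by simpa using h2.symm⟩

/-- Mutual cancellation lemmas: cancelling a prefix of a word in `Aₖ₊₂` that lies in
`Aₖ₊₁` leaves a word of `Aₖ`, and one that lies in `Aₖ` leaves a word of `Aₖ₊₁`. -/
lemma cancel : ∀ k : ℕ,
    (∀ w s : List Bool, w ∈ wordSet (k + 1) → w ++ s ∈ wordSet (k + 2) → s ∈ wordSet k) ∧
    (∀ w s : List Bool, w ∈ wordSet k → w ++ s ∈ wordSet (k + 2) → s ∈ wordSet (k + 1)) := by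
  intro k
  induction k with
  | zero =>
    constructor
    · intro w s hw hws
      rw [Set.mem_singleton_iff.mp hw] at hws
      exact absurd (Set.mem_singleton_iff.mp hws) (by simp)
    · intro w s hw _
      exact absurd hw (Set.notMem_empty w)
  | succ k ih =>
    obtain ⟨ih1, ih2⟩ := ih
    constructor
    · -- w ∈ A_{k+2}, w ++ s ∈ A_{k+3} ⊢ s ∈ A_{k+1}
      intro w s hw hws
      rcases hws with h | h
      · obtain ⟨p, hp, q, hq, heq⟩ := h
        obtain ⟨rfl, rfl⟩ := List.append_inj heq
          (by rw [wordSet_length _ _ hp, wordSet_length _ _ hw])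
        exact hq
      · obtain ⟨q, hq, p, hp, heq⟩ := h
        have hlen : q.length ≤ w.length := by
          rw [wordSet_length _ _ hq, wordSet_length _ _ hw]
          have e1 : Nat.fib (k + 1 + 1) = Nat.fib k + Nat.fib (k + 1) := Nat.fib_add_two
          have e2 : Nat.fib (k + 2) = Nat.fib k + Nat.fib (k + 1) := e1
          omega
        obtain ⟨r, hw', hp'⟩ := split_eq heq hlen
        have hr : r ∈ wordSet k := ih1 q r hq (hw' ▸ hw)
        exact ih2 r s hr (hp' ▸ hp)
    · -- w ∈ A_{k+1}, w ++ s ∈ A_{k+3} ⊢ s ∈ A_{k+2}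
      intro w s hw hws
      rcases hws with h | h
      · obtain ⟨p, hp, q, hq, heq⟩ := h
        have hlen : w.length ≤ p.length := by
          rw [wordSet_length _ _ hp, wordSet_length _ _ hw]
          have e1 : Nat.fib (k + 1 + 1) = Nat.fib k + Nat.fib (k + 1) := Nat.fib_add_two
          have e2 : Nat.fib (k + 2) = Nat.fib k + Nat.fib (k + 1) := e1
          omega
        obtain ⟨r, hp', hs'⟩ := split_eq heq.symm hlen
        have hr : r ∈ wordSet k := ih1 w r hw (hp' ▸ hp)
        rw [hs']
        exact cat_sub_right k hr hq
      · obtain ⟨q, hq, p, hp, heq⟩ := h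
        obtain ⟨rfl, rfl⟩ := List.append_inj heq
          (by rw [wordSet_length _ _ hq, wordSet_length _ _ hw])
        exact hp

/-- The intersection of the two halves of the recurrence. -/
lemma inter_eq (k : ℕ) :
    Set.image2 (· ++ ·) (wordSet (k + 2)) (wordSet (k + 1)) ∩
        Set.image2 (· ++ ·) (wordSet (k + 1)) (wordSet (k + 2)) =
      Set.image2 (· ++ ·) (wordSet (k + 1))
        (Set.image2 (· ++ ·) (wordSet k) (wordSet (k + 1))) := by
  ext w
  constructor
  · rintro ⟨hL, hR⟩
    obtain ⟨u, hu, v, hv, rfl⟩ := hL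
    obtain ⟨v', hv', u', hu', heq⟩ := hR
    have hlen : v'.length ≤ u.length := by
      rw [wordSet_length _ _ hv', wordSet_length _ _ hu]
      have e1 : Nat.fib (k + 1 + 1) = Nat.fib k + Nat.fib (k + 1) := Nat.fib_add_two
      have e2 : Nat.fib (k + 2) = Nat.fib k + Nat.fib (k + 1) := e1
      omega
    obtain ⟨s, hus, hu's⟩ := split_eq heq hlen
    have hs : s ∈ wordSet k := (cancel k).1 v' s hv' (hus ▸ hu)
    refine ⟨v', hv', s ++ v, Set.mem_image2_of_mem hs hv, ?_⟩
    show v' ++ (s ++ v) = u ++ v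
    rw [hus, List.append_assoc]
  · rintro h
    obtain ⟨p, hp, x, hx, rfl⟩ := h
    obtain ⟨q, hq, r, hr, rfl⟩ := hx
    constructor
    · refine ⟨p ++ q, cat_sub_left k hp hq, r, hr, ?_⟩
      show p ++ q ++ r = p ++ (q ++ r)
      exact List.append_assoc p q r
    · exact ⟨p, hp, q ++ r, cat_sub_right k hq hr, rfl⟩

lemma ncard_prod {α β : Type*} (s : Set α) (t : Set β) :
    (s ×ˢ t).ncard = s.ncard * t.ncard := by
  rw [← Nat.card_coe_set_eq, ← Nat.card_coe_set_eq, ← Nat.card_coe_set_eq,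
    Nat.card_congr (Equiv.Set.prod s t), Nat.card_prod]

lemma ncard_cat (U V : Set (List Bool)) (L : ℕ) (hU : ∀ u ∈ U, u.length = L) :
    (Set.image2 (· ++ ·) U V).ncard = U.ncard * V.ncard := by
  rw [← Set.image_uncurry_prod, Set.ncard_image_of_injOn, ncard_prod]
  rintro ⟨u1, v1⟩ ⟨h1, h1'⟩ ⟨u2, v2⟩ ⟨h2, h2'⟩ h
  obtain ⟨rfl, rfl⟩ := List.append_inj h (by rw [hU _ h1, hU _ h2])
  rfl

/-- The cardinality recurrence aₖ₊₃ + aₖ₊₁·(aₖ·aₖ₊₁) = aₖ₊₂·aₖ₊₁ + aₖ₊₁·aₖ₊₂. -/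
lemma rec_card (k : ℕ) :
    (wordSet (k + 3)).ncard +
        (wordSet (k + 1)).ncard * ((wordSet k).ncard * (wordSet (k + 1)).ncard) =
      (wordSet (k + 2)).ncard * (wordSet (k + 1)).ncard +
        (wordSet (k + 1)).ncard * (wordSet (k + 2)).ncard := by
  have hL := ncard_cat (wordSet (k + 2)) (wordSet (k + 1)) (Nat.fib (k + 2))
    (wordSet_length (k + 2))
  have hR := ncard_cat (wordSet (k + 1)) (wordSet (k + 2)) (Nat.fib (k + 1))
    (wordSet_length (k + 1))
  have hin := ncard_cat (wordSet k) (wordSet (k + 1)) (Nat.fib k) (wordSet_length k)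
  have hI := ncard_cat (wordSet (k + 1))
    (Set.image2 (· ++ ·) (wordSet k) (wordSet (k + 1))) (Nat.fib (k + 1))
    (wordSet_length (k + 1))
  have hunion := Set.ncard_union_add_ncard_inter
    (Set.image2 (· ++ ·) (wordSet (k + 2)) (wordSet (k + 1)))
    (Set.image2 (· ++ ·) (wordSet (k + 1)) (wordSet (k + 2)))
    ((wordSet_finite (k + 2)).image2 _ (wordSet_finite (k + 1)))
    ((wordSet_finite (k + 1)).image2 _ (wordSet_finite (k + 2)))
  rw [inter_eq, hI, hin, hL, hR] at hunion
  rw [← hunion, wordSet_three]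

/-- The auxiliary product `G m = ∏_{j<m} (j+1)^{f_{m-j}}`. -/
def G (m : ℕ) : ℕ := ∏ j ∈ Finset.range m, (j + 1) ^ Nat.fib (m - j)

lemma G_zero : G 0 = 1 := rfl

lemma G_one : G 1 = 1 := by simp [G]

lemma G_two : G 2 = 2 := by
  simp [G, Finset.prod_range_succ]

lemma G_succ_succ (m : ℕ) : G (m + 2) = (m + 2) * (G (m + 1) * G m) := by
  have h1 : ∀ j ∈ Finset.range (m + 1),
      (j + 1) ^ Nat.fib (m + 2 - j) =
        (j + 1) ^ Nat.fib (m + 1 - j) * (j + 1) ^ Nat.fib (m - j) := by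
    intro j hj
    rw [Finset.mem_range] at hj
    rw [show m + 2 - j = (m - j) + 2 by omega, show m + 1 - j = (m - j) + 1 by omega,
      Nat.fib_add_two, pow_add, mul_comm]
  have hB : ∏ j ∈ Finset.range (m + 1), (j + 1) ^ Nat.fib (m - j) =
      ∏ j ∈ Finset.range m, (j + 1) ^ Nat.fib (m - j) := by
    rw [Finset.prod_range_succ, Nat.sub_self, Nat.fib_zero, pow_zero, mul_one]
  unfold G
  rw [Finset.prod_range_succ, show m + 2 - (m + 1) = 1 by omega, Nat.fib_one, pow_one,
    Finset.prod_congr rfl h1, Finset.prod_mul_distrib, hB]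
  ring

lemma icc_eq (m : ℕ) :
    ∏ i ∈ Finset.Icc 2 (m + 2), (m + 3 - i) ^ Nat.fib (i - 2) = G m := by
  rw [← Finset.Ico_add_one_right_eq_Icc, Finset.prod_Ico_eq_prod_range]
  have h0 : m + 2 + 1 - 2 = m + 1 := by omega
  rw [h0]
  have h1 : ∀ j ∈ Finset.range (m + 1),
      (m + 3 - (2 + j)) ^ Nat.fib (2 + j - 2) = (m + 1 - j) ^ Nat.fib j := by
    intro j hj
    rw [Finset.mem_range] at hj
    rw [show m + 3 - (2 + j) = m + 1 - j by omega, show 2 + j - 2 = j by omega]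
  rw [Finset.prod_congr rfl h1, Finset.prod_range_succ']
  simp only [Nat.fib_zero, pow_zero, mul_one]
  have h2 : ∀ k ∈ Finset.range m,
      (m + 1 - (k + 1)) ^ Nat.fib (k + 1) =
        (fun j => (j + 1) ^ Nat.fib (m - j)) (m - 1 - k) := by
    intro k hk
    rw [Finset.mem_range] at hk
    simp only
    rw [show m - 1 - k + 1 = m + 1 - (k + 1) by omega, show m - (m - 1 - k) = k + 1 by omega]
  rw [Finset.prod_congr rfl h2]
  exact Finset.prod_range_reflect (fun j => (j + 1) ^ Nat.fib (m - j)) m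

lemma main : ∀ m : ℕ, (wordSet (m + 3)).ncard = (m + 2) * G m := by
  have h0 : (wordSet 0).ncard = 0 := by simp [wordSet]
  have h1 : (wordSet 1).ncard = 1 := Set.ncard_singleton _
  have h2 : (wordSet 2).ncard = 1 := Set.ncard_singleton _
  have h3 : (wordSet 3).ncard = 2 := by
    have t : (wordSet 3).ncard +
        (wordSet 1).ncard * ((wordSet 0).ncard * (wordSet 1).ncard) =
        (wordSet 2).ncard * (wordSet 1).ncard +
          (wordSet 1).ncard * (wordSet 2).ncard := rec_card 0
    rw [h0, h1, h2] at t
    omega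
  have h4 : (wordSet 4).ncard = 3 := by
    have t : (wordSet 4).ncard +
        (wordSet 2).ncard * ((wordSet 1).ncard * (wordSet 2).ncard) =
        (wordSet 3).ncard * (wordSet 2).ncard +
          (wordSet 2).ncard * (wordSet 3).ncard := rec_card 1
    rw [h1, h2, h3] at t
    omega
  have h5 : (wordSet 5).ncard = 8 := by
    have t : (wordSet 5).ncard +
        (wordSet 3).ncard * ((wordSet 2).ncard * (wordSet 3).ncard) =
        (wordSet 4).ncard * (wordSet 3).ncard +
          (wordSet 3).ncard * (wordSet 4).ncard := rec_card 2
    rw [h2, h3, h4] at t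
    omega
  intro m
  induction m using Nat.strong_induction_on with
  | _ m ih =>
    match m with
    | 0 => rw [h3, G_zero]
    | 1 => rw [h4, G_one]
    | 2 => rw [h5, G_two]
    | (r + 3) =>
      have ha : (wordSet (r + 3)).ncard = (r + 2) * G r := ih r (by omega)
      have hb : (wordSet (r + 3 + 1)).ncard = (r + 3) * G (r + 1) := ih (r + 1) (by omega)
      have hc : (wordSet (r + 3 + 2)).ncard = (r + 4) * G (r + 2) := ih (r + 2) (by omega)
      have hrec := rec_card (r + 3)
      rw [ha, hb, hc] at hrec
      have hkey : (r + 3 + 2) * G (r + 3) +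
          (r + 3) * G (r + 1) * ((r + 2) * G r * ((r + 3) * G (r + 1))) =
        (r + 4) * G (r + 2) * ((r + 3) * G (r + 1)) +
          (r + 3) * G (r + 1) * ((r + 4) * G (r + 2)) := by
        rw [show G (r + 3) = (r + 3) * (G (r + 2) * G (r + 1)) from G_succ_succ (r + 1),
          G_succ_succ r]
        ring
      exact Nat.add_right_cancel (hrec.trans hkey.symm)

theorem stmt6 (n : ℕ) (hn : 3 ≤ n) :
    (wordSet n).ncard =
      (n - 1) * ∏ i ∈ Finset.Icc 2 (n - 1), (n - i) ^ Nat.fib (i - 2) := by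
  obtain ⟨m, rfl⟩ : ∃ m, n = m + 3 := ⟨n - 3, by omega⟩
  have he : m + 3 - 1 = m + 2 := by omega
  rw [he]
  have hp : ∏ i ∈ Finset.Icc 2 (m + 2), (m + 3 - i) ^ Nat.fib (i - 2) = G m := icc_eq m
  rw [hp, main m]
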